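/- arXiv:2306.05187 — 2 statements merged into one kernel-verified Lean document; each statement's English description precedes it below -/
import Mathlib

section
/- Define the projection operator Proj(x, y, l) = y - l(x)·(∇l(x) ∇l(x)ᵀ / ‖∇l(x)‖²)·y when l(x) > 0 and yᵀ∇l(x) > 0, and Proj(x, y, l) = y otherwise. If x* satisfies l(x*) ≤ 0, l is convex and differentiable with ∇l(x) ≠ 0 whenever l(x) > 0, then (x - x*)ᵀ(Proj(x, y, l) - y) ≤ 0. -/
open scoped RealInnerProductSpace

lemma grad_ineq {n : ℕ} (x xs : EuclideanSpace ℝ (Fin n))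
    (l : EuclideanSpace ℝ (Fin n) → ℝ)
    (gradl : EuclideanSpace ℝ (Fin n))
    (hconv : ConvexOn ℝ Set.univ l)
    (hgrad : HasGradientAt l gradl x) :
    l x + ⟪gradl, xs - x⟫ ≤ l xs := by
  rcases eq_or_ne xs x with h | h
  · simp [h]
  set g : ℝ → ℝ := fun t => l (t • (xs - x) + x) with hg
  have hconvg : ConvexOn ℝ Set.univ g := by
    have h := hconv.comp_affineMap (AffineMap.lineMap (k := ℝ) x xs)
    simp only [Set.preimage_univ] at h
    have heq : (l ∘ (AffineMap.lineMap x xs : ℝ →ᵃ[ℝ] EuclideanSpace ℝ (Fin n))) = g := by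
      ext t; simp [g, AffineMap.lineMap_apply]
    rwa [heq] at h
  have hderiv : HasDerivAt g ⟪gradl, xs - x⟫ 0 := by
    have hline : HasDerivAt (fun t : ℝ => t • (xs - x) + x) (xs - x) 0 := by
      simpa using ((hasDerivAt_id (0:ℝ)).smul_const (xs - x)).add_const x
    have hF : HasFDerivAt l ((InnerProductSpace.toDual ℝ _) gradl) ((0 : ℝ) • (xs - x) + x) := by
      simpa using hgrad.hasFDerivAt
    have := hF.comp_hasDerivAt 0 hline
    simp only [InnerProductSpace.toDual_apply_apply] at this
    exact this
  have hslope := hconvg.le_slope_of_hasDerivAt (Set.mem_univ (0:ℝ)) (Set.mem_univ (1:ℝ))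
    one_pos hderiv
  have : ⟪gradl, xs - x⟫ ≤ g 1 - g 0 := by
    simpa [slope_def_field] using hslope
  have hg0 : g 0 = l x := by simp [g]
  have hg1 : g 1 = l xs := by simp [g]
  rw [hg0, hg1] at this
  linarith

theorem stmt5 (n : ℕ) (x y xs : EuclideanSpace ℝ (Fin n))
    (l : EuclideanSpace ℝ (Fin n) → ℝ)
    (gradl : EuclideanSpace ℝ (Fin n) → EuclideanSpace ℝ (Fin n))
    (hconv : ConvexOn ℝ Set.univ l)
    (hgrad : ∀ z, HasGradientAt l (gradl z) z)
    (hne : ∀ z, l z > 0 → gradl z ≠ 0)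
    (hxs : l xs ≤ 0)
    (Proj : EuclideanSpace ℝ (Fin n))
    (hProj : Proj = if l x > 0 ∧ (inner ℝ y (gradl x) : ℝ) > 0 then
        y - (l x * ((inner ℝ (gradl x) y : ℝ) / ‖gradl x‖ ^ 2)) • gradl x
      else y) :
    (inner ℝ (x - xs) (Proj - y) : ℝ) ≤ 0 := by
  by_cases hc : l x > 0 ∧ (inner ℝ y (gradl x) : ℝ) > 0
  · rw [hProj, if_pos hc]
    have hkey := grad_ineq x xs l (gradl x) hconv (hgrad x)
    have hgx : ⟪gradl x, x - xs⟫ ≥ 0 := by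
      have : ⟪gradl x, xs - x⟫ ≤ l xs - l x := by linarith
      have h2 : l xs - l x < 0 := by linarith [hc.1]
      have h3 : ⟪gradl x, xs - x⟫ ≤ 0 := by linarith
      have : ⟪gradl x, x - xs⟫ = -⟪gradl x, xs - x⟫ := by
        rw [← inner_neg_right]; congr 1; abel
      linarith [this]
    have hcnn : 0 ≤ l x * ((inner ℝ (gradl x) y : ℝ) / ‖gradl x‖ ^ 2) := by
      have h1 : (inner ℝ (gradl x) y : ℝ) > 0 := by
        rw [real_inner_comm]; exact hc.2
      exact mul_nonneg hc.1.le (div_nonneg h1.le (sq_nonneg _))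
    have : (y - (l x * ((inner ℝ (gradl x) y : ℝ) / ‖gradl x‖ ^ 2)) • gradl x) - y
        = -((l x * ((inner ℝ (gradl x) y : ℝ) / ‖gradl x‖ ^ 2)) • gradl x) := by abel
    rw [this, inner_neg_right, inner_smul_right]
    have : (0:ℝ) ≤ (l x * ((inner ℝ (gradl x) y : ℝ) / ‖gradl x‖ ^ 2)) * ⟪x - xs, gradl x⟫ := by
      apply mul_nonneg hcnn
      rwa [real_inner_comm]
    linarith
  · rw [hProj, if_neg hc]
    simp
end

section
/- Let x : [0,∞) → ℝⁿ solve ẋ = Proj(x, y(t), l) where l(x) = (‖x‖² - x̄²)/(2η x̄ + η²) and y is continuous. If l(x(0)) ≤ 1, then l(x(t)) ≤ 1, and hence ‖x(t)‖ ≤ x̄ + η, for all t ≥ 0. -/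
theorem stmt7 (n : ℕ) (xbar η : ℝ) (hxbar : 0 < xbar) (hη : 0 < η)
    (l : EuclideanSpace ℝ (Fin n) → ℝ)
    (hl : ∀ z, l z = (‖z‖ ^ 2 - xbar ^ 2) / (2 * η * xbar + η ^ 2))
    (gradl : EuclideanSpace ℝ (Fin n) → EuclideanSpace ℝ (Fin n))
    (hgradl : ∀ z, gradl z = (2 / (2 * η * xbar + η ^ 2)) • z)
    (Proj : EuclideanSpace ℝ (Fin n) → EuclideanSpace ℝ (Fin n) → EuclideanSpace ℝ (Fin n))
    (hProj : ∀ z w, Proj z w = if l z > 0 ∧ (inner ℝ w (gradl z) : ℝ) > 0 then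
        w - (l z * ((inner ℝ (gradl z) w : ℝ) / ‖gradl z‖ ^ 2)) • gradl z
      else w)
    (y : ℝ → EuclideanSpace ℝ (Fin n)) (hy : Continuous y)
    (x : ℝ → EuclideanSpace ℝ (Fin n))
    (hx : ∀ t ≥ (0 : ℝ), HasDerivAt x (Proj (x t) (y t)) t)
    (h0 : l (x 0) ≤ 1) :
    ∀ t ≥ (0 : ℝ), l (x t) ≤ 1 ∧ ‖x t‖ ≤ xbar + η := by
  have hcpos : (0:ℝ) < 2 * η * xbar + η ^ 2 := by positivity
  set c : ℝ := 2 * η * xbar + η ^ 2 with hcdef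
  -- key pointwise inequality
  have key : ∀ z w : EuclideanSpace ℝ (Fin n), 1 ≤ l z →
      (inner ℝ z (Proj z w) : ℝ) ≤ 0 := by
    intro z w hlz
    rw [hProj]
    by_cases hcase : l z > 0 ∧ (inner ℝ w (gradl z) : ℝ) > 0
    · rw [if_pos hcase]
      obtain ⟨hl0, hin⟩ := hcase
      have hin' : (inner ℝ w (gradl z) : ℝ) = (2/c) * (inner ℝ z w : ℝ) := by
        rw [hgradl, real_inner_smul_right, real_inner_comm]
      have hk : (0:ℝ) < 2/c := by positivity
      have hzw : 0 < (inner ℝ z w : ℝ) := by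
        rw [hin'] at hin; nlinarith
      have hz0 : z ≠ 0 := by
        intro h
        rw [h, inner_zero_left] at hzw
        exact lt_irrefl 0 hzw
      have hN : (0:ℝ) < ‖z‖ ^ 2 := by
        have := norm_pos_iff.mpr hz0
        positivity
      have e1 : (inner ℝ (gradl z) w : ℝ) = (2/c) * (inner ℝ z w : ℝ) := by
        rw [hgradl, real_inner_smul_left]
      have e2 : ‖gradl z‖ ^ 2 = (2/c)^2 * ‖z‖ ^ 2 := by
        rw [hgradl, norm_smul, mul_pow, Real.norm_eq_abs, sq_abs]
      have e3 : (inner ℝ z (gradl z) : ℝ) = (2/c) * ‖z‖ ^ 2 := by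
        rw [hgradl, real_inner_smul_right, real_inner_self_eq_norm_sq]
      rw [inner_sub_right, real_inner_smul_right, e1, e2, e3]
      have hmid : 2 / c * (inner ℝ z w : ℝ) / ((2 / c) ^ 2 * ‖z‖ ^ 2) * (2 / c * ‖z‖ ^ 2)
          = (inner ℝ z w : ℝ) := by
        field_simp
      rw [mul_assoc, hmid]
      nlinarith
    · rw [if_neg hcase]
      push_neg at hcase
      have hl0 : l z > 0 := by linarith
      have := hcase hl0
      rw [hgradl, real_inner_smul_right] at this
      have hk : (0:ℝ) < 2/c := by positivity
      have hzw : (inner ℝ w z : ℝ) ≤ 0 := by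
        by_contra hpos
        push_neg at hpos
        exact absurd this (not_le.mpr (mul_pos hk hpos))
      rw [real_inner_comm]; exact hzw
  -- derivative of t ↦ l (x t) on [0, ∞)
  have hderiv : ∀ t ≥ (0:ℝ), HasDerivAt (fun s => l (x s))
      (2 * (inner ℝ (x t) (Proj (x t) (y t)) : ℝ) / c) t := by
    intro t ht
    have hdx := hx t ht
    have h1 : HasDerivAt (fun s => (inner ℝ (x s) (x s) : ℝ))
        ((inner ℝ (x t) (Proj (x t) (y t)) : ℝ) + (inner ℝ (Proj (x t) (y t)) (x t) : ℝ)) t :=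
      HasDerivAt.inner ℝ hdx hdx
    have h2 : HasDerivAt (fun s => ((inner ℝ (x s) (x s) : ℝ) - xbar ^ 2) / c)
        (((inner ℝ (x t) (Proj (x t) (y t)) : ℝ) + (inner ℝ (Proj (x t) (y t)) (x t) : ℝ)) / c) t :=
      (h1.sub_const _).div_const c
    have heq : (fun s => l (x s)) = fun s => ((inner ℝ (x s) (x s) : ℝ) - xbar ^ 2) / c := by
      funext s
      rw [hl, real_inner_self_eq_norm_sq]
    rw [heq]
    convert h2 using 1
    rw [real_inner_comm (Proj (x t) (y t)) (x t)]
    ring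
  intro T hT
  have hmain : l (x T) ≤ 1 := by
    have hbound : ∀ ε > (0:ℝ), l (x T) ≤ 1 + ε * T := by
      intro ε hε
      have hcont : ContinuousOn (fun s => l (x s)) (Set.Icc 0 T) := by
        intro s hs
        exact ((hderiv s hs.1).continuousAt).continuousWithinAt
      have := image_le_of_deriv_right_lt_deriv_boundary
        (f := fun s => l (x s))
        (f' := fun s => 2 * (inner ℝ (x s) (Proj (x s) (y s)) : ℝ) / c)
        (B := fun s => 1 + ε * s) (B' := fun _ => ε)
        hcont
        (fun s hs => ((hderiv s hs.1).hasDerivWithinAt))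
        (by simpa using h0)
        (fun s => by
          have : HasDerivAt (fun u => 1 + ε * u) (0 + ε * 1) s :=
            (hasDerivAt_const s (1:ℝ)).add ((hasDerivAt_id s).const_mul ε)
          simpa using this)
        (fun s hs hfs => by
          have hs0 : (0:ℝ) ≤ s := hs.1
          change l (x s) = 1 + ε * s at hfs
          have h1le : 1 ≤ l (x s) := by
            rw [hfs]; nlinarith
          have := key (x s) (y s) h1le
          have : 2 * (inner ℝ (x s) (Proj (x s) (y s)) : ℝ) / c ≤ 0 := by
            apply div_nonpos_of_nonpos_of_nonneg
            · linarith
            · linarith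
          linarith)
      exact this (Set.right_mem_Icc.mpr hT)
    by_contra hcon
    push_neg at hcon
    set δ := l (x T) - 1 with hδ
    have hδpos : 0 < δ := by linarith
    have := hbound (δ / (T + 1)) (by positivity)
    have hTT : δ / (T + 1) * T < δ := by
      rw [div_mul_eq_mul_div, div_lt_iff₀ (by linarith)]
      nlinarith
    linarith
  refine ⟨hmain, ?_⟩
  have h1 : ‖x T‖ ^ 2 ≤ (xbar + η) ^ 2 := by
    rw [hl] at hmain
    rw [div_le_one hcpos] at hmain
    nlinarith
  nlinarith [norm_nonneg (x T)]
end
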